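/- Let f(n) = eⁿ. Among trees with 4 leaves, both 𝔠_{MDM,eⁿ} and 𝔠_{sd,eⁿ} attain their maximum exactly at the comb K₄: for every tree T with 4 leaves not isomorphic to K₄, 𝔠_{MDM,eⁿ}(T) < 𝔠_{MDM,eⁿ}(K₄) = (3/2)(e² + 1) and 𝔠_{sd,eⁿ}(T) < 𝔠_{sd,eⁿ}(K₄) = (3/√2)(e² + 1). -/

import Mathlib

/-- Rooted trees encoded as a root together with the list of subtrees
rooted at its children. -/
inductive MTree : Type
  | node : List MTree → MTree

namespace MTree

/-- Number of leaves of a tree (a single node counts as one leaf). -/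
def leafCount : MTree → ℕ
  | node ts => max 1 (ts.attach.map (fun x => leafCount x.1)).sum
decreasing_by
  have := List.sizeOf_lt_of_mem x.2
  simp only [node.sizeOf_spec]; omega

/-- `deltaF f T = Σ_{v ∈ V(T)} f (deg v)`, the `f`-size of `T`. -/
noncomputable def deltaF (f : ℕ → ℝ) : MTree → ℝ
  | node ts => f ts.length + (ts.attach.map (fun x => deltaF f x.1)).sum
decreasing_by
  have := List.sizeOf_lt_of_mem x.2
  simp only [node.sizeOf_spec]; omega

/-- The Colless-like index relative to a "dissimilarity" `D` and a function `f`: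
the sum, over all internal nodes `v`, of `D` applied to the list of `f`-sizes of
the subtrees rooted at the children of `v`. -/
noncomputable def cIndex (D : List ℝ → ℝ) (f : ℕ → ℝ) : MTree → ℝ
  | node ts => (if ts.isEmpty then 0 else D (ts.map (deltaF f)))
      + (ts.attach.map (fun x => cIndex D f x.1)).sum
decreasing_by
  have := List.sizeOf_lt_of_mem x.2
  simp only [node.sizeOf_spec]; omega

/-- The Colless index of a (bifurcating) tree: the sum over the internal nodes of the
absolute value of the difference of the numbers of leaves of the two child subtrees. -/
def colless : MTree → ℕ
  | node ts =>
      (match ts with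
       | [a, b] => ((a.leafCount : ℤ) - (b.leafCount : ℤ)).natAbs
       | _ => 0)
      + (ts.attach.map (fun x => colless x.1)).sum
decreasing_by
  have := List.sizeOf_lt_of_mem x.2
  simp only [node.sizeOf_spec]; omega

/-- The quadratic Colless index of a (bifurcating) tree. -/
def collessSq : MTree → ℕ
  | node ts =>
      (match ts with
       | [a, b] => ((a.leafCount : ℤ) - (b.leafCount : ℤ)).natAbs ^ 2
       | _ => 0)
      + (ts.attach.map (fun x => collessSq x.1)).sum
decreasing_by
  have := List.sizeOf_lt_of_mem x.2
  simp only [node.sizeOf_spec]; omega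

/-- A tree in the sense of the paper: no node of out-degree 1. -/
inductive WellFormed : MTree → Prop
  | node {ts : List MTree} : ts.length ≠ 1 → (∀ t ∈ ts, WellFormed t) →
      WellFormed (node ts)

/-- A bifurcating tree: every internal node has out-degree exactly 2. -/
inductive Bifurcating : MTree → Prop
  | node {ts : List MTree} : (ts.length = 0 ∨ ts.length = 2) →
      (∀ t ∈ ts, Bifurcating t) → Bifurcating (node ts)

/-- Isomorphism of (list-encoded) trees: the lists of child subtrees match up to
a permutation and recursively isomorphic subtrees. -/
inductive Iso : MTree → MTree → Prop
  | node {ts us vs : List MTree} :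
      List.Forall₂ Iso ts vs → vs.Perm us → Iso (node ts) (node us)

/-- A tree is fully symmetric when, for every internal node, the subtrees rooted at
its children are pairwise isomorphic. -/
inductive FullySymmetric : MTree → Prop
  | node {ts : List MTree} : (∀ s ∈ ts, ∀ t ∈ ts, Iso s t) →
      (∀ t ∈ ts, FullySymmetric t) → FullySymmetric (node ts)

/-- The comb `K_n` with `n ≥ 1` leaves. -/
def comb : ℕ → MTree
  | 0 => node []
  | 1 => node []
  | n + 2 => node [node [], comb (n + 1)]

/-- The star `FS_n`, whose root has `n` children, all of them leaves. -/
def star (n : ℕ) : MTree := node (List.replicate n (node []))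

/-- The median of a list of real numbers. -/
noncomputable def median (l : List ℝ) : ℝ :=
  let s := l.mergeSort (fun a b => a ≤ b)
  if l.length % 2 = 1 then s.getD (l.length / 2) 0
  else (s.getD (l.length / 2 - 1) 0 + s.getD (l.length / 2) 0) / 2

/-- The mean deviation from the median of a list of real numbers. -/
noncomputable def MDM (l : List ℝ) : ℝ :=
  (l.map (fun x => |x - median l|)).sum / l.length

/-- The sample variance of a list of real numbers. -/
noncomputable def svar (l : List ℝ) : ℝ :=
  (l.map (fun x => (x - l.sum / l.length) ^ 2)).sum / ((l.length : ℝ) - 1)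

/-- The sample standard deviation of a list of real numbers. -/
noncomputable def ssd (l : List ℝ) : ℝ := Real.sqrt (svar l)

end MTree

namespace MTree

private def L : MTree := node []
private def B : MTree := node [L, L]
private def S3 : MTree := node [L, L, L]
private def C3 : MTree := node [L, B]
private def C3' : MTree := node [B, L]

lemma leafCount_node (ts : List MTree) :
    leafCount (node ts) = max 1 (ts.map leafCount).sum := by
  rw [leafCount]; simp

lemma deltaF_node (f : ℕ → ℝ) (ts : List MTree) :
    deltaF f (node ts) = f ts.length + (ts.map (deltaF f)).sum := by
  rw [deltaF]; simp

lemma cIndex_node (D : List ℝ → ℝ) (f : ℕ → ℝ) (ts : List MTree) :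
    cIndex D f (node ts) =
      (if ts.isEmpty then 0 else D (ts.map (deltaF f))) + (ts.map (cIndex D f)).sum := by
  rw [cIndex]; simp

lemma one_le_leafCount (T : MTree) : 1 ≤ T.leafCount := by
  cases T with
  | node ts => rw [leafCount_node]; exact le_max_left _ _

lemma length_le_sum (ts : List MTree) : ts.length ≤ (ts.map leafCount).sum := by
  induction ts with
  | nil => simp
  | cons a l ih =>
      have := one_le_leafCount a
      simp only [List.map_cons, List.sum_cons, List.length_cons]
      omega

lemma eq_L {T : MTree} (hw : T.WellFormed) (h : T.leafCount = 1) : T = L := by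
  cases hw with
  | @node ts hlen hall =>
    rw [leafCount_node] at h
    have hls := length_le_sum ts
    have hlen0 : ts.length = 0 := by
      omega
    rw [List.length_eq_zero_iff] at hlen0
    rw [hlen0]; rfl

lemma eq_B {T : MTree} (hw : T.WellFormed) (h : T.leafCount = 2) : T = B := by
  cases hw with
  | @node ts hlen hall =>
    rw [leafCount_node] at h
    have hS : (ts.map leafCount).sum = 2 := by
      omega
    rcases ts with _ | ⟨a, _ | ⟨b, rest⟩⟩
    · simp at hS
    · simp at hlen
    · have ha := one_le_leafCount a
      have hb := one_le_leafCount b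
      have hr := length_le_sum rest
      simp only [List.map_cons, List.sum_cons] at hS
      have hr0 : rest.length = 0 := by omega
      rw [List.length_eq_zero_iff] at hr0
      subst hr0
      simp only [List.map_nil, List.sum_nil] at hS
      have ha1 : a.leafCount = 1 := by omega
      have hb1 : b.leafCount = 1 := by omega
      rw [eq_L (hall a (by simp)) ha1, eq_L (hall b (by simp)) hb1]
      rfl

lemma classify3 {T : MTree} (hw : T.WellFormed) (h : T.leafCount = 3) :
    T = S3 ∨ T = C3 ∨ T = C3' := by
  cases hw with
  | @node ts hlen hall =>
    rw [leafCount_node] at h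
    have hS : (ts.map leafCount).sum = 3 := by
      omega
    rcases ts with _ | ⟨a, _ | ⟨b, _ | ⟨c, rest⟩⟩⟩
    · simp at hS
    · simp at hlen
    · -- two children
      have ha := one_le_leafCount a
      have hb := one_le_leafCount b
      simp only [List.map_cons, List.map_nil, List.sum_cons, List.sum_nil] at hS
      have hwa := hall a (by simp)
      have hwb := hall b (by simp)
      have hcase : a.leafCount = 1 ∧ b.leafCount = 2 ∨ a.leafCount = 2 ∧ b.leafCount = 1 := by
        omega
      rcases hcase with ⟨h1, h2⟩ | ⟨h2, h1⟩
      · rw [eq_L hwa h1, eq_B hwb h2]; right; left; rfl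
      · rw [eq_B hwa h2, eq_L hwb h1]; right; right; rfl
    · -- three or more children
      have ha := one_le_leafCount a
      have hb := one_le_leafCount b
      have hc := one_le_leafCount c
      have hr := length_le_sum rest
      simp only [List.map_cons, List.sum_cons] at hS
      have hr0 : rest.length = 0 := by omega
      rw [List.length_eq_zero_iff] at hr0
      subst hr0
      simp only [List.map_nil, List.sum_nil] at hS
      have ha1 : a.leafCount = 1 := by omega
      have hb1 : b.leafCount = 1 := by omega
      have hc1 : c.leafCount = 1 := by omega
      rw [eq_L (hall a (by simp)) ha1, eq_L (hall b (by simp)) hb1,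
        eq_L (hall c (by simp)) hc1]
      left; rfl

lemma classify4 {T : MTree} (hw : T.WellFormed) (h : T.leafCount = 4) :
    T = node [L, S3] ∨ T = node [S3, L] ∨ T = node [L, C3] ∨ T = node [L, C3'] ∨
    T = node [C3, L] ∨ T = node [C3', L] ∨ T = node [B, B] ∨
    T = node [B, L, L] ∨ T = node [L, B, L] ∨ T = node [L, L, B] ∨
    T = node [L, L, L, L] := by
  cases hw with
  | @node ts hlen hall =>
    rw [leafCount_node] at h
    have hS : (ts.map leafCount).sum = 4 := by
      omega
    rcases ts with _ | ⟨a, _ | ⟨b, _ | ⟨c, _ | ⟨d, rest⟩⟩⟩⟩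
    · simp at hS
    · simp at hlen
    · -- two children
      have ha := one_le_leafCount a
      have hb := one_le_leafCount b
      simp only [List.map_cons, List.map_nil, List.sum_cons, List.sum_nil] at hS
      have hwa := hall a (by simp)
      have hwb := hall b (by simp)
      have hcase : a.leafCount = 1 ∧ b.leafCount = 3 ∨ a.leafCount = 2 ∧ b.leafCount = 2 ∨
          a.leafCount = 3 ∧ b.leafCount = 1 := by omega
      rcases hcase with ⟨h1, h3⟩ | ⟨h2, h2'⟩ | ⟨h3, h1⟩
      · rw [eq_L hwa h1]
        rcases classify3 hwb h3 with rfl | rfl | rfl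
        · left; rfl
        · right; right; left; rfl
        · right; right; right; left; rfl
      · rw [eq_B hwa h2, eq_B hwb h2']
        right; right; right; right; right; right; left; rfl
      · rw [eq_L hwb h1]
        rcases classify3 hwa h3 with rfl | rfl | rfl
        · right; left; rfl
        · right; right; right; right; left; rfl
        · right; right; right; right; right; left; rfl
    · -- three children
      have ha := one_le_leafCount a
      have hb := one_le_leafCount b
      have hc := one_le_leafCount c
      simp only [List.map_cons, List.map_nil, List.sum_cons, List.sum_nil] at hS
      have hwa := hall a (by simp)
      have hwb := hall b (by simp)
      have hwc := hall c (by simp)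
      have hcase : a.leafCount = 2 ∧ b.leafCount = 1 ∧ c.leafCount = 1 ∨
          a.leafCount = 1 ∧ b.leafCount = 2 ∧ c.leafCount = 1 ∨
          a.leafCount = 1 ∧ b.leafCount = 1 ∧ c.leafCount = 2 := by omega
      rcases hcase with ⟨h1, h2, h3⟩ | ⟨h1, h2, h3⟩ | ⟨h1, h2, h3⟩
      · rw [eq_B hwa h1, eq_L hwb h2, eq_L hwc h3]
        right; right; right; right; right; right; right; left; rfl
      · rw [eq_L hwa h1, eq_B hwb h2, eq_L hwc h3]
        right; right; right; right; right; right; right; right; left; rfl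
      · rw [eq_L hwa h1, eq_L hwb h2, eq_B hwc h3]
        right; right; right; right; right; right; right; right; right; left; rfl
    · -- four or more children
      have ha := one_le_leafCount a
      have hb := one_le_leafCount b
      have hc := one_le_leafCount c
      have hd := one_le_leafCount d
      have hr := length_le_sum rest
      simp only [List.map_cons, List.sum_cons] at hS
      have hr0 : rest.length = 0 := by omega
      rw [List.length_eq_zero_iff] at hr0
      subst hr0
      simp only [List.map_nil, List.sum_nil] at hS
      rw [eq_L (hall a (by simp)) (by omega), eq_L (hall b (by simp)) (by omega),
        eq_L (hall c (by simp)) (by omega), eq_L (hall d (by simp)) (by omega)]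
      right; right; right; right; right; right; right; right; right; right; rfl

end MTree

namespace MTree

private lemma mergeSort_pair (a b : ℝ) :
    List.mergeSort [a, b] (fun x y => x ≤ y) = if a ≤ b then [a, b] else [b, a] := by
  simp [List.mergeSort, List.merge]

lemma median_pair (a b : ℝ) : median [a, b] = (a + b) / 2 := by
  simp only [median, mergeSort_pair, List.length_cons, List.length_nil]
  norm_num
  split_ifs with h <;> simp <;> ring

lemma MDM_pair (a b : ℝ) : MDM [a, b] = |a - b| / 2 := by
  simp only [MDM, median_pair, List.map_cons, List.map_nil, List.sum_cons, List.sum_nil,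
    List.length_cons, List.length_nil]
  have h1 : a - (a + b) / 2 = (a - b) / 2 := by ring
  have h2 : b - (a + b) / 2 = -((a - b) / 2) := by ring
  rw [h1, h2, abs_neg, abs_div]
  norm_num

lemma svar_pair (a b : ℝ) : svar [a, b] = (a - b) ^ 2 / 2 := by
  simp only [svar, List.map_cons, List.map_nil, List.sum_cons, List.sum_nil,
    List.length_cons, List.length_nil]
  norm_num
  ring_nf

lemma ssd_pair (a b : ℝ) : ssd [a, b] = |a - b| / Real.sqrt 2 := by
  rw [ssd, svar_pair, Real.sqrt_div (sq_nonneg _), Real.sqrt_sq_eq_abs]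

private lemma mergeSort_tripleA (a c : ℝ) (h : a ≤ c) :
    List.mergeSort [a, a, c] (fun x y => x ≤ y) = [a, a, c] := by
  simp [List.mergeSort, List.merge, h]

private lemma mergeSort_tripleB (a c : ℝ) (h : a ≤ c) :
    List.mergeSort [a, c, a] (fun x y => x ≤ y) = [a, a, c] := by
  rcases eq_or_lt_of_le h with rfl | hlt
  · simp [List.mergeSort, List.merge]
  · simp [List.mergeSort, List.merge, not_le.2 hlt, h]

private lemma mergeSort_tripleC (a c : ℝ) (h : a ≤ c) :
    List.mergeSort [c, a, a] (fun x y => x ≤ y) = [a, a, c] := by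
  rcases eq_or_lt_of_le h with rfl | hlt
  · simp [List.mergeSort, List.merge]
  · simp [List.mergeSort, List.merge, not_le.2 hlt, h]

lemma MDM_tripleA (a c : ℝ) (h : a ≤ c) : MDM [a, a, c] = (c - a) / 3 := by
  simp only [MDM, median, mergeSort_tripleA a c h, List.length_cons, List.length_nil]
  norm_num [abs_of_nonneg (show (0:ℝ) ≤ c - a by linarith)]

lemma MDM_tripleB (a c : ℝ) (h : a ≤ c) : MDM [a, c, a] = (c - a) / 3 := by
  simp only [MDM, median, mergeSort_tripleB a c h, List.length_cons, List.length_nil]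
  norm_num [abs_of_nonneg (show (0:ℝ) ≤ c - a by linarith)]

lemma MDM_tripleC (a c : ℝ) (h : a ≤ c) : MDM [c, a, a] = (c - a) / 3 := by
  simp only [MDM, median, mergeSort_tripleC a c h, List.length_cons, List.length_nil]
  norm_num [abs_of_nonneg (show (0:ℝ) ≤ c - a by linarith)]

lemma svar_triple (x y z : ℝ) :
    svar [x, y, z] = ((x - (x+y+z)/3)^2 + (y - (x+y+z)/3)^2 + (z - (x+y+z)/3)^2) / 2 := by
  simp only [svar, List.map_cons, List.map_nil, List.sum_cons, List.sum_nil,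
    List.length_cons, List.length_nil]
  norm_num
  ring_nf

lemma MDM_rep4 (a : ℝ) : MDM [a, a, a, a] = 0 := by
  have hms : List.mergeSort [a, a, a, a] (fun x y => x ≤ y) = [a, a, a, a] := by
    simp [List.mergeSort, List.merge]
  simp only [MDM, median, hms, List.length_cons, List.length_nil]
  norm_num

lemma svar_rep4 (a : ℝ) : svar [a, a, a, a] = 0 := by
  simp only [svar, List.map_cons, List.map_nil, List.sum_cons, List.sum_nil,
    List.length_cons, List.length_nil]
  norm_num
  ring_nf

end MTree

namespace MTree

private lemma isoL : Iso L L := Iso.node List.Forall₂.nil (List.Perm.refl _)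
private lemma isoB : Iso B B :=
  Iso.node (List.Forall₂.cons isoL (List.Forall₂.cons isoL List.Forall₂.nil)) (List.Perm.refl _)
private lemma isoC3 : Iso C3 C3 :=
  Iso.node (List.Forall₂.cons isoL (List.Forall₂.cons isoB List.Forall₂.nil)) (List.Perm.refl _)
private lemma isoC3' : Iso C3' C3 :=
  Iso.node (List.Forall₂.cons isoB (List.Forall₂.cons isoL List.Forall₂.nil))
    (List.Perm.swap L B [])

private lemma comb4_eq : comb 4 = node [L, C3] := rfl

private lemma iso1 : Iso (node [L, C3]) (comb 4) := by
  rw [comb4_eq]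
  exact Iso.node (List.Forall₂.cons isoL (List.Forall₂.cons isoC3 List.Forall₂.nil))
    (List.Perm.refl _)

private lemma iso2 : Iso (node [L, C3']) (comb 4) := by
  rw [comb4_eq]
  exact Iso.node (List.Forall₂.cons isoL (List.Forall₂.cons isoC3' List.Forall₂.nil))
    (List.Perm.refl _)

private lemma iso3 : Iso (node [C3, L]) (comb 4) := by
  rw [comb4_eq]
  exact Iso.node (List.Forall₂.cons isoC3 (List.Forall₂.cons isoL List.Forall₂.nil))
    (List.Perm.swap L C3 [])

private lemma iso4 : Iso (node [C3', L]) (comb 4) := by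
  rw [comb4_eq]
  exact Iso.node (List.Forall₂.cons isoC3' (List.Forall₂.cons isoL List.Forall₂.nil))
    (List.Perm.swap L C3 [])

-- value computations
private lemma dF_L : deltaF (fun m => Real.exp m) L = 1 := by
  show deltaF _ (node []) = 1
  rw [deltaF_node]
  simp

private lemma dF_B : deltaF (fun m => Real.exp m) B = Real.exp 2 + 2 := by
  show deltaF _ (node [L, L]) = _
  rw [deltaF_node]
  simp [dF_L]
  norm_num
  try ring

private lemma dF_S3 : deltaF (fun m => Real.exp m) S3 = Real.exp 3 + 3 := by
  show deltaF _ (node [L, L, L]) = _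
  rw [deltaF_node]
  simp [dF_L]
  norm_num
  try ring

private lemma dF_C3 : deltaF (fun m => Real.exp m) C3 = 2 * Real.exp 2 + 3 := by
  show deltaF _ (node [L, B]) = _
  rw [deltaF_node]
  simp [dF_L, dF_B]
  norm_num
  ring

private lemma dF_C3' : deltaF (fun m => Real.exp m) C3' = 2 * Real.exp 2 + 3 := by
  show deltaF _ (node [B, L]) = _
  rw [deltaF_node]
  simp [dF_L, dF_B]
  norm_num
  ring

private lemma cI_L (D : List ℝ → ℝ) : cIndex D (fun m => Real.exp m) L = 0 := by
  show cIndex _ _ (node []) = 0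
  rw [cIndex_node]
  simp

private lemma abs_e21 : |(1 : ℝ) - (Real.exp 2 + 2)| = Real.exp 2 + 1 := by
  rw [abs_sub_comm, abs_of_nonneg (by nlinarith [Real.exp_pos 2] : (0:ℝ) ≤ Real.exp 2 + 2 - 1)]
  ring

private lemma cI_MDM_B : cIndex MDM (fun m => Real.exp m) B = 0 := by
  show cIndex _ _ (node [L, L]) = 0
  rw [cIndex_node]
  simp [cI_L, dF_L, MDM_pair]

private lemma cI_ssd_B : cIndex ssd (fun m => Real.exp m) B = 0 := by
  show cIndex _ _ (node [L, L]) = 0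
  rw [cIndex_node]
  simp [cI_L, dF_L, ssd_pair]

private lemma cI_MDM_C3 : cIndex MDM (fun m => Real.exp m) C3 = (Real.exp 2 + 1) / 2 := by
  show cIndex _ _ (node [L, B]) = _
  rw [cIndex_node]
  simp [cI_L, cI_MDM_B, dF_L, dF_B, MDM_pair, abs_e21]

private lemma cI_ssd_C3 :
    cIndex ssd (fun m => Real.exp m) C3 = (Real.exp 2 + 1) / Real.sqrt 2 := by
  show cIndex _ _ (node [L, B]) = _
  rw [cIndex_node]
  simp [cI_L, cI_ssd_B, dF_L, dF_B, ssd_pair, abs_e21]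

private lemma cI_MDM_comb4 :
    cIndex MDM (fun m => Real.exp m) (comb 4) = 3 / 2 * (Real.exp 2 + 1) := by
  rw [comb4_eq, cIndex_node]
  simp [cI_L, cI_MDM_C3, dF_L, dF_C3, MDM_pair]
  rw [abs_sub_comm, abs_of_nonneg (by nlinarith [Real.exp_pos 2] : (0:ℝ) ≤ 2 * Real.exp 2 + 3 - 1)]
  ring

private lemma cI_ssd_comb4 :
    cIndex ssd (fun m => Real.exp m) (comb 4) = 3 / Real.sqrt 2 * (Real.exp 2 + 1) := by
  rw [comb4_eq, cIndex_node]
  simp [cI_L, cI_ssd_C3, dF_L, dF_C3, ssd_pair]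
  rw [abs_sub_comm, abs_of_nonneg (by nlinarith [Real.exp_pos 2] : (0:ℝ) ≤ 2 * Real.exp 2 + 3 - 1)]
  rw [← add_div]
  have h2 : (3:ℝ) / Real.sqrt 2 * (Real.exp 2 + 1) = 3 * (Real.exp 2 + 1) / Real.sqrt 2 := by
    ring
  rw [h2]
  congr 1
  ring

end MTree

namespace MTree

lemma ssd_tripleA (a c : ℝ) (h : a ≤ c) : ssd [a, a, c] = (c - a) / Real.sqrt 3 := by
  rw [ssd, svar_triple]
  have h1 : ((a - (a+a+c)/3)^2 + (a - (a+a+c)/3)^2 + (c - (a+a+c)/3)^2) / 2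
      = (c - a)^2 / 3 := by ring
  rw [h1, Real.sqrt_div (sq_nonneg _), Real.sqrt_sq_eq_abs, abs_of_nonneg (by linarith)]

lemma ssd_tripleB (a c : ℝ) (h : a ≤ c) : ssd [a, c, a] = (c - a) / Real.sqrt 3 := by
  rw [ssd, svar_triple]
  have h1 : ((a - (a+c+a)/3)^2 + (c - (a+c+a)/3)^2 + (a - (a+c+a)/3)^2) / 2
      = (c - a)^2 / 3 := by ring
  rw [h1, Real.sqrt_div (sq_nonneg _), Real.sqrt_sq_eq_abs, abs_of_nonneg (by linarith)]

lemma ssd_tripleC (a c : ℝ) (h : a ≤ c) : ssd [c, a, a] = (c - a) / Real.sqrt 3 := by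
  rw [ssd, svar_triple]
  have h1 : ((c - (c+a+a)/3)^2 + (a - (c+a+a)/3)^2 + (a - (c+a+a)/3)^2) / 2
      = (c - a)^2 / 3 := by ring
  rw [h1, Real.sqrt_div (sq_nonneg _), Real.sqrt_sq_eq_abs, abs_of_nonneg (by linarith)]

lemma ssd_rep4 (a : ℝ) : ssd [a, a, a, a] = 0 := by
  rw [ssd, svar_rep4, Real.sqrt_zero]

private lemma cI_MDM_S3 : cIndex MDM (fun m => Real.exp m) S3 = 0 := by
  show cIndex _ _ (node [L, L, L]) = 0
  rw [cIndex_node]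
  simp [cI_L, dF_L]
  rw [MDM_tripleA 1 1 le_rfl]
  norm_num

private lemma cI_ssd_S3 : cIndex ssd (fun m => Real.exp m) S3 = 0 := by
  show cIndex _ _ (node [L, L, L]) = 0
  rw [cIndex_node]
  simp [cI_L, dF_L]
  rw [ssd_tripleA 1 1 le_rfl]
  norm_num

private lemma exp3_lt : Real.exp 3 + 2 < 3 * (Real.exp 2 + 1) := by
  have h1 : Real.exp 3 = Real.exp 2 * Real.exp 1 := by rw [← Real.exp_add]; norm_num
  have h2 : Real.exp 1 < 3 := by
    have := Real.exp_one_lt_d9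
    linarith
  nlinarith [Real.exp_pos 2]

private lemma abs_e32 : |(1 : ℝ) - (Real.exp 3 + 3)| = Real.exp 3 + 2 := by
  rw [abs_sub_comm, abs_of_nonneg (by nlinarith [Real.exp_pos 3] : (0:ℝ) ≤ Real.exp 3 + 3 - 1)]
  ring

private lemma abs_e32' : |(Real.exp 3 + 3) - (1 : ℝ)| = Real.exp 3 + 2 := by
  rw [abs_of_nonneg (by nlinarith [Real.exp_pos 3] : (0:ℝ) ≤ Real.exp 3 + 3 - 1)]
  ring

private lemma sqrt2_pos : (0 : ℝ) < Real.sqrt 2 := by positivity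
private lemma sqrt3_pos : (0 : ℝ) < Real.sqrt 3 := by positivity

private lemma one_le_eB : (1 : ℝ) ≤ Real.exp 2 + 2 := by nlinarith [Real.exp_pos 2]

private lemma lt_div_sqrt2 {a b : ℝ} (h : a < 3 * b) :
    a / Real.sqrt 2 < 3 / Real.sqrt 2 * b := by
  rw [div_mul_eq_mul_div, div_lt_div_iff₀ sqrt2_pos sqrt2_pos]
  nlinarith [sqrt2_pos]

private lemma tri_sqrt {b : ℝ} (hb : 0 < b) : b / Real.sqrt 3 < 3 / Real.sqrt 2 * b := by
  have h23 : Real.sqrt 2 < Real.sqrt 3 := by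
    apply Real.sqrt_lt_sqrt <;> norm_num
  rw [div_mul_eq_mul_div, div_lt_div_iff₀ sqrt3_pos sqrt2_pos]
  nlinarith [sqrt2_pos, sqrt3_pos, mul_pos hb sqrt3_pos]

end MTree

/-- Theorem 19(b): among trees with `4` leaves, both `𝔠_{MDM,eⁿ}` and `𝔠_{sd,eⁿ}`
attain their maximum exactly at the comb `K₄`, with the stated values. -/
theorem cIndex_MDM_sd_exp_max_four :
    MTree.cIndex MTree.MDM (fun m => Real.exp m) (MTree.comb 4) =
      3 / 2 * (Real.exp 2 + 1) ∧
    MTree.cIndex MTree.ssd (fun m => Real.exp m) (MTree.comb 4) =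
      3 / Real.sqrt 2 * (Real.exp 2 + 1) ∧
    ∀ T : MTree, T.WellFormed → T.leafCount = 4 → ¬ T.Iso (MTree.comb 4) →
      MTree.cIndex MTree.MDM (fun m => Real.exp m) T <
        MTree.cIndex MTree.MDM (fun m => Real.exp m) (MTree.comb 4) ∧
      MTree.cIndex MTree.ssd (fun m => Real.exp m) T <
        MTree.cIndex MTree.ssd (fun m => Real.exp m) (MTree.comb 4) := by
  open MTree in
  refine ⟨cI_MDM_comb4, cI_ssd_comb4, ?_⟩
  intro T hwf hlc hniso
  have hE2 := Real.exp_pos 2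
  have hE3 := Real.exp_pos 3
  rcases classify4 hwf hlc with rfl | rfl | rfl | rfl | rfl | rfl | rfl | rfl | rfl | rfl | rfl
  · -- node [L, S3]
    rw [cI_MDM_comb4, cI_ssd_comb4, cIndex_node, cIndex_node]
    simp [cI_L, cI_MDM_S3, cI_ssd_S3, dF_L, dF_S3, MDM_pair, ssd_pair, abs_e32]
    constructor
    · linarith [exp3_lt]
    · exact lt_div_sqrt2 (by linarith [exp3_lt])
  · -- node [S3, L]
    rw [cI_MDM_comb4, cI_ssd_comb4, cIndex_node, cIndex_node]
    simp [cI_L, cI_MDM_S3, cI_ssd_S3, dF_L, dF_S3, MDM_pair, ssd_pair, abs_e32']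
    constructor
    · linarith [exp3_lt]
    · exact lt_div_sqrt2 (by linarith [exp3_lt])
  · exact absurd iso1 hniso
  · exact absurd iso2 hniso
  · exact absurd iso3 hniso
  · exact absurd iso4 hniso
  · -- node [B, B]
    rw [cI_MDM_comb4, cI_ssd_comb4, cIndex_node, cIndex_node]
    simp [cI_MDM_B, cI_ssd_B, dF_B, MDM_pair, ssd_pair]
    all_goals positivity
  · -- node [B, L, L]
    rw [cI_MDM_comb4, cI_ssd_comb4, cIndex_node, cIndex_node]
    simp [cI_L, cI_MDM_B, cI_ssd_B, dF_L, dF_B]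
    rw [MDM_tripleC 1 _ one_le_eB, ssd_tripleC 1 _ one_le_eB]
    have he : Real.exp 2 + 2 - 1 = Real.exp 2 + 1 := by ring
    rw [he]
    constructor
    · linarith
    · exact tri_sqrt (by linarith)
  · -- node [L, B, L]
    rw [cI_MDM_comb4, cI_ssd_comb4, cIndex_node, cIndex_node]
    simp [cI_L, cI_MDM_B, cI_ssd_B, dF_L, dF_B]
    rw [MDM_tripleB 1 _ one_le_eB, ssd_tripleB 1 _ one_le_eB]
    have he : Real.exp 2 + 2 - 1 = Real.exp 2 + 1 := by ring
    rw [he]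
    constructor
    · linarith
    · exact tri_sqrt (by linarith)
  · -- node [L, L, B]
    rw [cI_MDM_comb4, cI_ssd_comb4, cIndex_node, cIndex_node]
    simp [cI_L, cI_MDM_B, cI_ssd_B, dF_L, dF_B]
    rw [MDM_tripleA 1 _ one_le_eB, ssd_tripleA 1 _ one_le_eB]
    have he : Real.exp 2 + 2 - 1 = Real.exp 2 + 1 := by ring
    rw [he]
    constructor
    · linarith
    · exact tri_sqrt (by linarith)
  · -- node [L, L, L, L]
    rw [cI_MDM_comb4, cI_ssd_comb4, cIndex_node, cIndex_node]
    simp [cI_L, dF_L]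
    rw [MDM_rep4, ssd_rep4]
    constructor <;> positivity
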